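/- Let α ∈ ℝ with 1 < α < 2, let q₀ > 0, and let S ⊆ ℂ be a closed set consisting only of isolated points (a closed discrete set) with S ⊆ {z ∈ ℂ : Re z ≥ q₀}. Let f, g : ℂ → ℂ be complex-differentiable at every point of ℂ ∖ S, and suppose that (-η)^{1/α} · f(η) = -g(η) for every η ∈ ℂ with Re η < 0, where w^{1/α} denotes the principal branch of the complex power. Then f(z) = 0 and g(z) = 0 for every z ∈ ℂ ∖ S. -/

import Mathlib

open Complex Filter Set Topology

/-- The boundary values of the power `w ^ (1/α)` from the two sides of the cut differ. -/
private lemma exp_branch_ne (α : ℝ) (hα1 : 1 < α) (hα2 : α < 2) (r : ℝ) :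
    Complex.exp (((r : ℂ) + Real.pi * Complex.I) * ((1 / α : ℝ) : ℂ)) ≠
      Complex.exp (((r : ℂ) - Real.pi * Complex.I) * ((1 / α : ℝ) : ℂ)) := by
  intro hexp
  rw [Complex.exp_eq_exp_iff_exists_int] at hexp
  obtain ⟨n, hn⟩ := hexp
  have hI : (2 * (Real.pi : ℂ) * Complex.I) ≠ 0 := by
    simp [Real.pi_ne_zero, Complex.I_ne_zero]
  have hcn : ((1 / α : ℝ) : ℂ) = (n : ℂ) := by
    apply mul_left_cancel₀ hI
    linear_combination hn
  have hreal : (1 / α : ℝ) = (n : ℝ) := by exact_mod_cast hcn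
  have h0 : (0 : ℝ) < 1 / α := by positivity
  have h1 : (1 / α : ℝ) < 1 := by
    rw [div_lt_one (by linarith)]; linarith
  rw [hreal] at h0 h1
  have hn0 : (0 : ℤ) < n := by exact_mod_cast h0
  have hn1 : n < 1 := by exact_mod_cast h1
  omega

/-- Claim (3.2) in the proof of Theorem 1: if `f, g` are holomorphic outside a closed
discrete set `S` contained in `{Re z ≥ q₀}` with `q₀ > 0`, and
`(-η)^{1/α} f(η) = -g(η)` for all `η` with `Re η < 0`, then `f = g = 0` off `S`. -/
theorem stmt_2 (α : ℝ) (hα1 : 1 < α) (hα2 : α < 2) (q₀ : ℝ) (hq₀ : 0 < q₀)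
    (S : Set ℂ) (hSclosed : IsClosed S)
    (hSdisc : ∀ s ∈ S, ∃ U ∈ nhds s, U ∩ S = {s})
    (hSre : S ⊆ {z : ℂ | q₀ ≤ z.re})
    (f g : ℂ → ℂ)
    (hf : ∀ z ∉ S, DifferentiableAt ℂ f z)
    (hg : ∀ z ∉ S, DifferentiableAt ℂ g z)
    (heq : ∀ η : ℂ, η.re < 0 → (-η) ^ ((1 / α : ℝ) : ℂ) * f η = -g η) :
    ∀ z ∉ S, f z = 0 ∧ g z = 0 := by
  -- `S` is discrete
  have hdisc : DiscreteTopology S := by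
    rw [discreteTopology_subtype_iff]
    intro x hx
    obtain ⟨U, hU, hUS⟩ := hSdisc x hx
    rw [← Filter.empty_mem_iff_bot]
    have h2 : ((U ∩ {x}ᶜ) ∩ S) ∈ 𝓝[≠] x ⊓ 𝓟 S :=
      Filter.inter_mem_inf
        (Filter.inter_mem (mem_nhdsWithin_of_mem_nhds hU) self_mem_nhdsWithin)
        (Filter.mem_principal_self S)
    have h3 : (U ∩ {x}ᶜ) ∩ S = (∅ : Set ℂ) := by
      apply Set.eq_empty_iff_forall_notMem.2
      rintro z ⟨⟨hzU, hzx⟩, hzS⟩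
      apply hzx
      have : z ∈ U ∩ S := ⟨hzU, hzS⟩
      rw [hUS] at this
      exact this
    rwa [h3] at h2
  -- `S` is countable, so its complement is preconnected
  have hScount : S.Countable := by
    rw [← Set.countable_coe_iff]
    exact TopologicalSpace.separableSpace_iff_countable.mp inferInstance
  have hrank : 1 < Module.rank ℝ ℂ := by rw [Complex.rank_real_complex]; norm_num
  have hScon : IsPreconnected Sᶜ :=
    (hScount.isPathConnected_compl_of_one_lt_rank hrank).isConnected.isPreconnected
  have hSopen : IsOpen Sᶜ := hSclosed.isOpen_compl
  have hfd : DifferentiableOn ℂ f Sᶜ := fun z hz => (hf z hz).differentiableWithinAt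
  have hgd : DifferentiableOn ℂ g Sᶜ := fun z hz => (hg z hz).differentiableWithinAt
  have hfa : AnalyticOnNhd ℂ f Sᶜ := hfd.analyticOnNhd hSopen
  have hga : AnalyticOnNhd ℂ g Sᶜ := hgd.analyticOnNhd hSopen
  set F : ℂ → ℂ := fun z => (-z) ^ ((1 / α : ℝ) : ℂ) * f z + g z with hFdef
  have honeg : IsOpen {z : ℂ | z.re < 0} := isOpen_lt Complex.continuous_re continuous_const
  have hev : ∀ᶠ z in 𝓝 (-1 : ℂ), z.re < 0 := by
    apply honeg.eventually_mem
    simp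
  -- main continuation lemma on slit half-planes
  have main : ∀ V : Set ℂ, IsOpen V → IsPreconnected V →
      (∀ z ∈ V, z.re < q₀) → (∀ z ∈ V, -z ∈ Complex.slitPlane) → (-1 : ℂ) ∈ V →
      Set.EqOn F 0 V := by
    intro V hVo hVc hVq hVs hV1
    have hFd : DifferentiableOn ℂ F V := by
      intro z hz
      have hzS : z ∉ S := by
        intro h
        have := hSre h
        simp only [Set.mem_setOf_eq] at this
        exact absurd (hVq z hz) (not_lt.2 this)
      exact (((differentiableAt_fun_id.neg.cpow
        (differentiableAt_const ((1 / α : ℝ) : ℂ))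
        (hVs z hz)).mul (hf z hzS)).add (hg z hzS)).differentiableWithinAt
    apply (hFd.analyticOnNhd hVo).eqOn_zero_of_preconnected_of_eventuallyEq_zero hVc hV1
    filter_upwards [hev] with z hz
    have h := heq z hz
    simp only [F, Pi.zero_apply]
    rw [h]
    ring
  -- the two slit regions
  have ho1 : IsOpen {z : ℂ | z.re < q₀} := isOpen_lt Complex.continuous_re continuous_const
  have ho2 : IsOpen {z : ℂ | 0 < z.im} := isOpen_lt continuous_const Complex.continuous_im
  have ho3 : IsOpen {z : ℂ | z.im < 0} := isOpen_lt Complex.continuous_im continuous_const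
  have hVpeq : {z : ℂ | z.re < q₀ ∧ 0 < z.im} ∪ {z : ℂ | z.re < 0} =
      {z : ℂ | z.re < q₀ ∧ (0 < z.im ∨ z.re < 0)} := by
    ext z
    simp only [Set.mem_union, Set.mem_setOf_eq]
    constructor
    · rintro (⟨h1, h2⟩ | h3)
      exacts [⟨h1, Or.inl h2⟩, ⟨by linarith, Or.inr h3⟩]
    · rintro ⟨h1, h2 | h3⟩
      exacts [Or.inl ⟨h1, h2⟩, Or.inr h3]
  have hVmeq : {z : ℂ | z.re < q₀ ∧ z.im < 0} ∪ {z : ℂ | z.re < 0} =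
      {z : ℂ | z.re < q₀ ∧ (z.im < 0 ∨ z.re < 0)} := by
    ext z
    simp only [Set.mem_union, Set.mem_setOf_eq]
    constructor
    · rintro (⟨h1, h2⟩ | h3)
      exacts [⟨h1, Or.inl h2⟩, ⟨by linarith, Or.inr h3⟩]
    · rintro ⟨h1, h2 | h3⟩
      exacts [Or.inl ⟨h1, h2⟩, Or.inr h3]
  have hFp : Set.EqOn F 0 {z : ℂ | z.re < q₀ ∧ (0 < z.im ∨ z.re < 0)} := by
    apply main
    · rw [← hVpeq]
      exact (ho1.inter ho2).union honeg
    · rw [← hVpeq]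
      apply IsPreconnected.union (-1 + Complex.I)
      · refine ⟨?_, ?_⟩
        · simp only [Complex.add_re, Complex.neg_re, Complex.one_re, Complex.I_re, add_zero]
          linarith
        · simp
      · simp only [Set.mem_setOf_eq, Complex.add_re, Complex.neg_re, Complex.one_re,
          Complex.I_re, add_zero]
        linarith
      · exact ((convex_halfSpace_re_lt q₀).inter (convex_halfSpace_im_gt 0)).isPreconnected
      · exact (convex_halfSpace_re_lt 0).isPreconnected
    · exact fun z hz => hz.1
    · intro z hz
      rcases hz.2 with h | h
      · exact Or.inr (by simp only [Complex.neg_im]; intro h'; rw [neg_eq_zero] at h'; linarith)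
      · exact Or.inl (by simp only [Complex.neg_re]; linarith)
    · exact ⟨by simp; linarith, Or.inr (by simp)⟩
  have hFm : Set.EqOn F 0 {z : ℂ | z.re < q₀ ∧ (z.im < 0 ∨ z.re < 0)} := by
    apply main
    · rw [← hVmeq]
      exact (ho1.inter ho3).union honeg
    · rw [← hVmeq]
      apply IsPreconnected.union (-1 - Complex.I)
      · refine ⟨?_, ?_⟩
        · simp only [Complex.sub_re, Complex.neg_re, Complex.one_re, Complex.I_re, sub_zero]
          linarith
        · simp
      · simp only [Set.mem_setOf_eq, Complex.sub_re, Complex.neg_re, Complex.one_re,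
          Complex.I_re, sub_zero]
        linarith
      · exact ((convex_halfSpace_re_lt q₀).inter (convex_halfSpace_im_lt 0)).isPreconnected
      · exact (convex_halfSpace_re_lt 0).isPreconnected
    · exact fun z hz => hz.1
    · intro z hz
      rcases hz.2 with h | h
      · exact Or.inr (by simp only [Complex.neg_im]; intro h'; rw [neg_eq_zero] at h'; linarith)
      · exact Or.inl (by simp only [Complex.neg_re]; linarith)
    · exact ⟨by simp; linarith, Or.inr (by simp)⟩
  -- boundary values on the positive real axis kill `f`
  have hft : ∀ t : ℝ, 0 < t → t < q₀ → f (t : ℂ) = 0 := by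
    intro t ht0 htq
    have htS : (t : ℂ) ∉ S := by
      intro h
      have := hSre h
      simp only [Set.mem_setOf_eq, Complex.ofReal_re] at this
      linarith
    have hfc : Filter.Tendsto f (𝓝 (t : ℂ)) (𝓝 (f (t : ℂ))) := (hf _ htS).continuousAt.tendsto
    have hgc : Filter.Tendsto g (𝓝 (t : ℂ)) (𝓝 (g (t : ℂ))) := (hg _ htS).continuousAt.tendsto
    have hε : Filter.Tendsto (fun n : ℕ => (1 / ((n : ℝ) + 1))) atTop (𝓝 0) :=
      tendsto_one_div_add_atTop_nhds_zero_nat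
    have hεpos : ∀ n : ℕ, (0 : ℝ) < 1 / ((n : ℝ) + 1) := fun n => by positivity
    have hre : ((-(t : ℂ)).re : ℝ) < 0 := by simp [ht0]
    have him : (-(t : ℂ)).im = 0 := by simp
    have habs : ‖(-(t : ℂ))‖ = t := by
      rw [norm_neg, Complex.norm_real, Real.norm_of_nonneg ht0.le]
    -- the common limiting argument, for a sign `s = ±1`
    have mainlim : ∀ s : ℝ, s ≠ 0 →
        (∀ n : ℕ, F ((t : ℂ) + ((s * (1 / ((n : ℝ) + 1)) : ℝ) : ℂ) * Complex.I) = 0) →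
        Filter.Tendsto
          (fun n : ℕ =>
            Complex.log (-((t : ℂ) + ((s * (1 / ((n : ℝ) + 1)) : ℝ) : ℂ) * Complex.I)))
          atTop (𝓝 ((Real.log t : ℂ) - (s : ℂ) * Real.pi * Complex.I)) →
        Complex.exp (((Real.log t : ℂ) - (s : ℂ) * Real.pi * Complex.I) * ((1 / α : ℝ) : ℂ))
          * f (t : ℂ) + g (t : ℂ) = 0 := by
      intro s hs hFz hlog
      set u : ℕ → ℂ := fun n => (t : ℂ) + ((s * (1 / ((n : ℝ) + 1)) : ℝ) : ℂ) * Complex.I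
        with hu
      have hune : ∀ n, -u n ≠ 0 := by
        intro n h
        have h2 : (-u n).im = 0 := by rw [h]; simp
        simp only [hu, Complex.neg_im, Complex.add_im, Complex.ofReal_im, Complex.mul_im,
          Complex.ofReal_re, Complex.I_im, Complex.I_re, mul_zero, mul_one, zero_add,
          neg_eq_zero, zero_mul, add_zero] at h2
        rcases mul_eq_zero.mp h2 with h' | h'
        · exact hs h'
        · exact absurd h' (ne_of_gt (hεpos n))
      have hεsC : Filter.Tendsto (fun n : ℕ => ((s * (1 / ((n : ℝ) + 1)) : ℝ) : ℂ))
          atTop (𝓝 0) := by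
        rw [show ((0 : ℂ)) = ((s * 0 : ℝ) : ℂ) by simp]
        exact (Complex.continuous_ofReal.tendsto _).comp (hε.const_mul s)
      have hulim : Filter.Tendsto u atTop (𝓝 (t : ℂ)) := by
        have h := (tendsto_const_nhds (x := (t : ℂ)) (f := atTop (α := ℕ))).add
          (hεsC.mul_const Complex.I)
        simpa only [zero_mul, add_zero] using h
      have hcpow : Filter.Tendsto (fun n => (-u n) ^ ((1 / α : ℝ) : ℂ)) atTop
          (𝓝 (Complex.exp (((Real.log t : ℂ) - (s : ℂ) * Real.pi * Complex.I)
            * ((1 / α : ℝ) : ℂ)))) := by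
        have h1 := hlog.mul_const ((1 / α : ℝ) : ℂ)
        have h2 := (Complex.continuous_exp.tendsto _).comp h1
        refine h2.congr fun n => ?_
        exact (Complex.cpow_def_of_ne_zero (hune n) _).symm
      have hFlim : Filter.Tendsto (fun n => F (u n)) atTop
          (𝓝 (Complex.exp (((Real.log t : ℂ) - (s : ℂ) * Real.pi * Complex.I)
            * ((1 / α : ℝ) : ℂ)) * f (t : ℂ) + g (t : ℂ))) :=
        (hcpow.mul (hfc.comp hulim)).add (hgc.comp hulim)
      have h0 : Filter.Tendsto (fun n : ℕ => F (u n)) atTop (𝓝 0) := by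
        have hz : (fun n : ℕ => F (u n)) = fun _ => (0 : ℂ) := funext hFz
        rw [hz]
        exact tendsto_const_nhds
      exact tendsto_nhds_unique hFlim h0
    -- sign +1 : approach from above, `-u n` has negative imaginary part
    have e1 : Complex.exp (((Real.log t : ℂ) - (1 : ℂ) * Real.pi * Complex.I)
        * ((1 / α : ℝ) : ℂ)) * f (t : ℂ) + g (t : ℂ) = 0 := by
      apply mainlim 1 one_ne_zero
      · intro n
        apply hFp
        refine ⟨by simp [htq], Or.inl ?_⟩
        simp only [Complex.add_im, Complex.ofReal_im, Complex.mul_im, Complex.ofReal_re,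
          Complex.I_im, Complex.I_re, mul_zero, mul_one, zero_add, zero_mul, add_zero]
        simpa using hεpos n
      · have hnu : Filter.Tendsto
            (fun n : ℕ => -((t : ℂ) + ((1 * (1 / ((n : ℝ) + 1)) : ℝ) : ℂ) * Complex.I))
            atTop (𝓝[{z : ℂ | z.im < 0}] (-(t : ℂ))) := by
          apply tendsto_nhdsWithin_of_tendsto_nhds_of_eventually_within
          · have hεsC : Filter.Tendsto (fun n : ℕ => ((1 * (1 / ((n : ℝ) + 1)) : ℝ) : ℂ))
                atTop (𝓝 0) := by
              rw [show ((0 : ℂ)) = (((1 : ℝ) * 0 : ℝ) : ℂ) by simp]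
              exact (Complex.continuous_ofReal.tendsto _).comp (hε.const_mul 1)
            have h := ((tendsto_const_nhds (x := (t : ℂ)) (f := atTop (α := ℕ))).add
              (hεsC.mul_const Complex.I)).neg
            simpa only [zero_mul, add_zero] using h
          · apply Filter.Eventually.of_forall
            intro n
            simp only [Set.mem_setOf_eq, Complex.neg_im, Complex.add_im, Complex.ofReal_im,
              Complex.mul_im, Complex.ofReal_re, Complex.I_im, Complex.I_re, mul_zero, mul_one,
              zero_add, zero_mul, add_zero, neg_neg, neg_lt, neg_zero]
            simpa using hεpos n
        have hl := (Complex.tendsto_log_nhdsWithin_im_neg_of_re_neg_of_im_zero hre him).comp hnu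
        rw [habs] at hl
        have harg : ((Real.log t : ℂ) - ((1 : ℝ) : ℂ) * Real.pi * Complex.I)
            = ((Real.log t : ℂ) - Real.pi * Complex.I) := by push_cast; ring
        rw [harg]
        exact hl.congr fun n => rfl
    -- sign -1 : approach from below, `-u n` has positive imaginary part
    have e2 : Complex.exp (((Real.log t : ℂ) - ((-1 : ℝ) : ℂ) * Real.pi * Complex.I)
        * ((1 / α : ℝ) : ℂ)) * f (t : ℂ) + g (t : ℂ) = 0 := by
      apply mainlim (-1) (by norm_num)
      · intro n
        apply hFm
        refine ⟨by simp [htq], Or.inl ?_⟩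
        simp only [Complex.add_im, Complex.ofReal_im, Complex.mul_im, Complex.ofReal_re,
          Complex.I_im, Complex.I_re, mul_zero, mul_one, zero_add, zero_mul, add_zero]
        have := hεpos n
        simp only [neg_one_mul]
        linarith
      · have hnu : Filter.Tendsto
            (fun n : ℕ => -((t : ℂ) + (((-1 : ℝ) * (1 / ((n : ℝ) + 1)) : ℝ) : ℂ) * Complex.I))
            atTop (𝓝[{z : ℂ | 0 ≤ z.im}] (-(t : ℂ))) := by
          apply tendsto_nhdsWithin_of_tendsto_nhds_of_eventually_within
          · have hεsC : Filter.Tendsto (fun n : ℕ => (((-1 : ℝ) * (1 / ((n : ℝ) + 1)) : ℝ) : ℂ))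
                atTop (𝓝 0) := by
              rw [show ((0 : ℂ)) = (((-1 : ℝ) * 0 : ℝ) : ℂ) by simp]
              exact (Complex.continuous_ofReal.tendsto _).comp (hε.const_mul (-1))
            have h := ((tendsto_const_nhds (x := (t : ℂ)) (f := atTop (α := ℕ))).add
              (hεsC.mul_const Complex.I)).neg
            simpa only [zero_mul, add_zero] using h
          · apply Filter.Eventually.of_forall
            intro n
            simp only [Set.mem_setOf_eq, Complex.neg_im, Complex.add_im, Complex.ofReal_im,
              Complex.mul_im, Complex.ofReal_re, Complex.I_im, Complex.I_re, mul_zero, mul_one,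
              zero_add, zero_mul, add_zero]
            have := hεpos n
            linarith
        have hl := (Complex.tendsto_log_nhdsWithin_im_nonneg_of_re_neg_of_im_zero hre him).comp hnu
        rw [habs] at hl
        have harg : ((Real.log t : ℂ) - ((-1 : ℝ) : ℂ) * Real.pi * Complex.I)
            = ((Real.log t : ℂ) + Real.pi * Complex.I) := by push_cast; ring
        rw [harg]
        exact hl.congr fun n => rfl
    -- combine the two boundary values
    have harg1 : ((Real.log t : ℂ) - (1 : ℂ) * Real.pi * Complex.I)
        = ((Real.log t : ℂ) - Real.pi * Complex.I) := by ring
    have harg2 : ((Real.log t : ℂ) - ((-1 : ℝ) : ℂ) * Real.pi * Complex.I)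
        = ((Real.log t : ℂ) + Real.pi * Complex.I) := by push_cast; ring
    rw [harg1] at e1
    rw [harg2] at e2
    have hsub : (Complex.exp (((Real.log t : ℂ) + Real.pi * Complex.I) * ((1 / α : ℝ) : ℂ))
        - Complex.exp (((Real.log t : ℂ) - Real.pi * Complex.I) * ((1 / α : ℝ) : ℂ)))
        * f (t : ℂ) = 0 := by
      linear_combination e2 - e1
    have hne := sub_ne_zero.mpr (exp_branch_ne α hα1 hα2 (Real.log t))
    exact (mul_eq_zero.mp hsub).resolve_left hne
  -- `f` vanishes frequently near `q₀/2`, hence everywhere off `S`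
  have hz₀S : ((q₀ / 2 : ℝ) : ℂ) ∈ Sᶜ := by
    intro h
    have := hSre h
    simp only [Set.mem_setOf_eq, Complex.ofReal_re] at this
    linarith
  have hε : Filter.Tendsto (fun n : ℕ => (1 / ((n : ℝ) + 1))) atTop (𝓝 0) :=
    tendsto_one_div_add_atTop_nhds_zero_nat
  have hw : Filter.Tendsto (fun k : ℕ => ((q₀ / 2 + q₀ / 4 * (1 / ((k : ℝ) + 1)) : ℝ) : ℂ))
      atTop (𝓝[≠] ((q₀ / 2 : ℝ) : ℂ)) := by
    apply tendsto_nhdsWithin_of_tendsto_nhds_of_eventually_within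
    · have hr : Filter.Tendsto (fun k : ℕ => (q₀ / 2 + q₀ / 4 * (1 / ((k : ℝ) + 1)) : ℝ))
          atTop (𝓝 (q₀ / 2)) := by
        have h := (tendsto_const_nhds (x := (q₀ / 2 : ℝ)) (f := atTop (α := ℕ))).add
          (hε.const_mul (q₀ / 4))
        simpa using h
      exact (Complex.continuous_ofReal.tendsto _).comp hr
    · apply Filter.Eventually.of_forall
      intro k
      simp only [Set.mem_compl_iff, Set.mem_singleton_iff, Complex.ofReal_inj]
      intro h
      have hpos : (0 : ℝ) < q₀ / 4 * (1 / ((k : ℝ) + 1)) := by positivity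
      have : q₀ / 4 * (1 / ((k : ℝ) + 1)) = 0 := by linarith
      linarith
  have hfreq : ∃ᶠ z in 𝓝[≠] ((q₀ / 2 : ℝ) : ℂ), f z = 0 := by
    apply hw.frequently
    apply Filter.Frequently.of_forall
    intro k
    apply hft
    · positivity
    · have h1 : 1 / ((k : ℝ) + 1) ≤ 1 := by
        rw [div_le_one (by positivity)]
        simp [Nat.cast_nonneg]
      nlinarith
  have hf0 : Set.EqOn f 0 Sᶜ :=
    hfa.eqOn_zero_of_preconnected_of_frequently_eq_zero hScon hz₀S hfreq
  have hm1 : (-1 : ℂ) ∈ Sᶜ := by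
    intro h
    have := hSre h
    simp only [Set.mem_setOf_eq, Complex.neg_re, Complex.one_re] at this
    linarith
  have hg0 : Set.EqOn g 0 Sᶜ := by
    apply hga.eqOn_zero_of_preconnected_of_eventuallyEq_zero hScon hm1
    filter_upwards [hev] with z hz
    have hzS : z ∈ Sᶜ := by
      intro h
      have := hSre h
      simp only [Set.mem_setOf_eq] at this
      linarith
    have h := heq z hz
    have hfz : f z = 0 := hf0 hzS
    rw [hfz, mul_zero] at h
    simpa using h.symm
  intro z hz
  exact ⟨hf0 hz, hg0 hz⟩
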